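/- Let K = ℤ/2 × ℤ/2 and define ω ∈ C³(K, ℂˣ) by ω(x,y,z) = i^{x₁ y₁ z₂}, where the coordinates are represented by integers in {0,1}. Then for all x, y, z, w ∈ K one has d³(ω)(x,y,z,w) = ω(y,z,w)·ω(xy,z,w)⁻¹·ω(x,yz,w)·ω(x,y,zw)⁻¹·ω(x,y,z) = (−1)^{x₁ y₁ z₂ w₂}. -/

import Mathlib

/-!
Statement 14: for `ω(x,y,z) = i^{x₁y₁z₂}` on the Klein four-group,
`d³(ω)(x,y,z,w) = (−1)^{x₁y₁z₂w₂}`.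
-/

namespace Zesting

/-- The Klein four-group. -/
abbrev K := ZMod 2 × ZMod 2

/-- `ω(x,y,z) = i^{x₁y₁z₂}`, with coordinates represented in `{0,1}`. -/
noncomputable def w14 : K → K → K → ℂˣ := fun x y z =>
  (Units.mk0 Complex.I Complex.I_ne_zero) ^ (x.1.val * y.1.val * z.2.val)

lemma aux14 (a b c d e : ZMod 2) :
    w14 (b,0) (c,0) (0,e) * (w14 (a+b,0) (c,0) (0,e))⁻¹ * w14 (a,0) (b+c,0) (0,e)
      * (w14 (a,0) (b,0) (0,d+e))⁻¹ * w14 (a,0) (b,0) (0,d) =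
    (-1 : ℂˣ) ^ (a.val * b.val * d.val * e.val) := by
  have h01 : ∀ x : ZMod 2, x = 0 ∨ x = 1 := by decide
  rcases h01 a with rfl | rfl <;> rcases h01 b with rfl | rfl <;> rcases h01 c with rfl | rfl <;>
    rcases h01 d with rfl | rfl <;> rcases h01 e with rfl | rfl <;>
    · ext
      simp [w14, show ((1:ZMod 2)+1)=0 by decide, ZMod.val_one, pow_succ,
        Complex.I_mul_I, Complex.inv_I]

theorem statement14 : ∀ x y z w : K,
    w14 y z w * (w14 (x + y) z w)⁻¹ * w14 x (y + z) w * (w14 x y (z + w))⁻¹ *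
        w14 x y z =
      (-1 : ℂˣ) ^ (x.1.val * y.1.val * z.2.val * w.2.val) := by
  have hw : ∀ p q r s t u : ZMod 2, w14 (p,q) (r,s) (t,u) = w14 (p,0) (r,0) (0,u) := by
    intros; rfl
  rintro ⟨a,a2⟩ ⟨b,b2⟩ ⟨c,d⟩ ⟨w1,e⟩
  simp only [Prod.mk_add_mk, hw]
  exact aux14 a b c d e

end Zesting
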